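/- For all real θ > 0 and integers d ≥ 1, ∑_{k=0}^{d-1} (C(d-1,k)/(k+1)) · ψ_{d+1}^{k+1}(θ) = (1/d)·(1 - ψ_{d+1}^0(θ)). -/

import Mathlib

open Finset Filter

/-- ψ_n^k(θ) = (∏_{i=1}^{k}(θ+i-1) · ∏_{j=1}^{n-k}(θ+j-1)) / ∏_{l=1}^{n}(2θ+l-1). -/
noncomputable def psi (θ : ℝ) (n k : ℕ) : ℝ :=
  ((∏ i ∈ Finset.range k, (θ + i)) * ∏ j ∈ Finset.range (n - k), (θ + j)) /
    ∏ l ∈ Finset.range n, (2 * θ + l)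
noncomputable def RF (x : ℝ) (k : ℕ) : ℝ := ∏ i ∈ Finset.range k, (x + i)

lemma RF_succ (x : ℝ) (k : ℕ) : RF x (k+1) = RF x k * (x + k) := by
  simp [RF, Finset.prod_range_succ]

lemma vand (x y : ℝ) : ∀ n : ℕ,
    ∑ k ∈ Finset.range (n+1), (n.choose k : ℝ) * RF x k * RF y (n - k) = RF (x + y) n := by
  intro n
  induction n with
  | zero => simp [RF]
  | succ n ih =>
    have split : ∀ k ∈ Finset.range (n+1),
        ((n.choose k : ℝ)) * RF x k * RF y (n - k) * (x + y + n)
          = (n.choose k : ℝ) * RF x (k+1) * RF y (n - k)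
            + (n.choose k : ℝ) * RF x k * RF y (n - k + 1) := by
      intro k hk
      have hk' : k ≤ n := Nat.lt_succ_iff.mp (Finset.mem_range.mp hk)
      have hc : ((n - k : ℕ) : ℝ) = (n : ℝ) - k := by
        rw [Nat.cast_sub hk']
      rw [RF_succ, RF_succ, hc]
      ring
    have h1 : RF (x + y) (n+1) = ∑ k ∈ Finset.range (n+1),
        ((n.choose k : ℝ)) * RF x k * RF y (n - k) * (x + y + n) := by
      rw [← Finset.sum_mul, ih, RF_succ]
    rw [h1, Finset.sum_congr rfl split, Finset.sum_add_distrib,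
      Finset.sum_range_succ' (fun k => ((n+1).choose k : ℝ) * RF x k * RF y (n + 1 - k)) (n+1)]
    have hB : ∑ k ∈ Finset.range (n+1), (n.choose k : ℝ) * RF x k * RF y (n - k + 1)
        = RF y (n + 1)
          + ∑ k ∈ Finset.range n, (n.choose (k+1) : ℝ) * RF x (k+1) * RF y (n - (k+1) + 1) := by
      rw [Finset.sum_range_succ' (fun k => (n.choose k : ℝ) * RF x k * RF y (n - k + 1)) n]
      simp [RF]
      ring
    have hA : ∑ k ∈ Finset.range (n+1), (n.choose k : ℝ) * RF x (k+1) * RF y (n - k)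
        = ∑ k ∈ Finset.range n, (n.choose k : ℝ) * RF x (k+1) * RF y (n - k)
          + RF x (n+1) := by
      rw [Finset.sum_range_succ]; simp [RF]
    rw [hB, hA]
    have hgoal : ∑ k ∈ Finset.range n, (n.choose k : ℝ) * RF x (k+1) * RF y (n - k)
          + ∑ k ∈ Finset.range n, (n.choose (k+1) : ℝ) * RF x (k+1) * RF y (n - (k+1) + 1)
        = ∑ k ∈ Finset.range n, ((n+1).choose (k+1) : ℝ) * RF x (k+1) * RF y (n + 1 - (k+1)) := by
      rw [← Finset.sum_add_distrib]
      refine Finset.sum_congr rfl ?_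
      intro k hk
      have hkn := Finset.mem_range.mp hk
      have h0 : n - (k+1) + 1 = n - k := by omega
      have h1 : n + 1 - (k+1) = n - k := by omega
      rw [h0, h1, Nat.choose_succ_succ]
      push_cast; ring
    have hRHS : ∑ k ∈ Finset.range (n+1), ((n+1).choose (k+1) : ℝ) * RF x (k+1) * RF y (n + 1 - (k+1))
        = ∑ k ∈ Finset.range n, ((n+1).choose (k+1) : ℝ) * RF x (k+1) * RF y (n + 1 - (k+1))
          + RF x (n+1) := by
      rw [Finset.sum_range_succ]; simp [RF]
    simp only [hRHS]
    have hf0 : ((n+1).choose 0 : ℝ) * RF x 0 * RF y (n + 1 - 0) = RF y (n+1) := by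
      simp [RF]
    rw [hf0]
    linarith [hgoal]

lemma RF_pos (x : ℝ) (hx : 0 < x) (n : ℕ) : 0 < RF x n := by
  refine Finset.prod_pos fun i _ => ?_
  positivity

lemma keyS (θ : ℝ) (d : ℕ) :
    2 * ∑ k ∈ Finset.range (d+1), (d.choose k : ℝ) * RF θ k * RF θ (d+1-k)
      = (2*θ + d) * RF (2*θ) d := by
  have hrefl : ∑ k ∈ Finset.range (d+1), (d.choose k : ℝ) * RF θ k * RF θ (d+1-k)
      = ∑ k ∈ Finset.range (d+1), (d.choose k : ℝ) * RF θ (d-k) * RF θ (k+1) := by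
    rw [← Finset.sum_range_reflect]
    refine Finset.sum_congr rfl ?_
    intro k hk
    have hkd := Nat.lt_succ_iff.mp (Finset.mem_range.mp hk)
    have h1 : d + 1 - 1 - k = d - k := by omega
    have h2 : d + 1 - (d - k) = k + 1 := by omega
    rw [h1, h2, Nat.choose_symm hkd]
  conv_lhs => rw [two_mul]
  nth_rw 2 [hrefl]
  rw [← Finset.sum_add_distrib]
  have : ∀ k ∈ Finset.range (d+1),
      (d.choose k : ℝ) * RF θ k * RF θ (d+1-k) + (d.choose k : ℝ) * RF θ (d-k) * RF θ (k+1)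
        = (2*θ + d) * ((d.choose k : ℝ) * RF θ k * RF θ (d-k)) := by
    intro k hk
    have hkd := Nat.lt_succ_iff.mp (Finset.mem_range.mp hk)
    have h1 : d + 1 - k = (d - k) + 1 := by omega
    have hc : ((d - k : ℕ) : ℝ) = (d : ℝ) - k := by rw [Nat.cast_sub hkd]
    rw [h1, RF_succ, RF_succ, hc]
    ring
  rw [Finset.sum_congr rfl this, ← Finset.mul_sum]
  have hv := vand θ θ d
  rw [show θ + θ = 2 * θ by ring] at hv
  rw [hv]

lemma psi_sum (θ : ℝ) (hθ : 0 < θ) (d : ℕ) :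
    ∑ k ∈ Finset.range (d+1), (d.choose k : ℝ) * psi θ (d+1) k = 1/2 := by
  have hD : (0:ℝ) < RF (2*θ) (d+1) := RF_pos _ (by linarith) _
  have hpsi : ∀ k, psi θ (d+1) k = RF θ k * RF θ (d+1-k) / RF (2*θ) (d+1) := fun k => rfl
  have hsum : ∑ k ∈ Finset.range (d+1), (d.choose k : ℝ) * psi θ (d+1) k
      = (∑ k ∈ Finset.range (d+1), (d.choose k : ℝ) * RF θ k * RF θ (d+1-k)) / RF (2*θ) (d+1) := by
    rw [Finset.sum_div]
    exact Finset.sum_congr rfl fun k _ => by rw [hpsi]; ring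
  rw [hsum, div_eq_iff (ne_of_gt hD)]
  have h2 := keyS θ d
  have hD1 : RF (2*θ) (d+1) = RF (2*θ) d * (2*θ + d) := RF_succ _ _
  rw [hD1]
  linarith [h2]

theorem snowdrift_Mc_identity (θ : ℝ) (hθ : 0 < θ) (d : ℕ) (hd : 1 ≤ d) :
    ∑ k ∈ Finset.range d, ((Nat.choose (d - 1) k : ℝ) / (k + 1)) * psi θ (d + 1) (k + 1) =
      (1 / d) * (1 / 2 - psi θ (d + 1) 0) := by
  have hd0 : (0:ℝ) < d := by exact_mod_cast hd
  have hchoose : ∀ k : ℕ, ((d-1).choose k : ℝ) / (k + 1) = (d.choose (k+1) : ℝ) / d := by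
    intro k
    have h := Nat.add_one_mul_choose_eq (d-1) k
    rw [show (d-1) + 1 = d by omega] at h
    have h' : (d:ℝ) * ((d-1).choose k) = (d.choose (k+1)) * (k+1) := by exact_mod_cast h
    have hk1 : (0:ℝ) < (k:ℝ) + 1 := by positivity
    field_simp
    linarith [h']
  have step : ∑ k ∈ Finset.range d, ((Nat.choose (d - 1) k : ℝ) / (k + 1)) * psi θ (d + 1) (k + 1)
      = (1/d) * ∑ k ∈ Finset.range d, (d.choose (k+1) : ℝ) * psi θ (d + 1) (k + 1) := by
    rw [Finset.mul_sum]
    exact Finset.sum_congr rfl fun k _ => by rw [hchoose k]; ring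
  rw [step]
  have key := psi_sum θ hθ d
  rw [Finset.sum_range_succ' (fun k => (d.choose k : ℝ) * psi θ (d+1) k) d] at key
  simp only [Nat.choose_zero_right, Nat.cast_one, one_mul] at key
  have : ∑ k ∈ Finset.range d, (d.choose (k+1) : ℝ) * psi θ (d + 1) (k + 1)
      = 1/2 - psi θ (d+1) 0 := by linarith [key]
  rw [this]
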